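/- For every sufficiently large integer n divisible by 16, the ordered 3-uniform hypergraph S_n is linear and (e,v)-inseparable, and the derived graph F_{S_n} is 4-connected. Consequently, there exist infinitely many ordered, (e,v)-inseparable, linear 3-uniform hypergraphs S such that the derived graph F_S is 4-connected. -/

import Mathlib

/-- A finite `k`-uniform hypergraph with vertices in `ℕ`; the ordering of the vertices
is the one inherited from `ℕ`. -/
structure KUniformHypergraph (k : ℕ) where
  verts : Finset ℕ
  edges : Finset (Finset ℕ)
  card_edges : ∀ e ∈ edges, e.card = k
  edges_subset : ∀ e ∈ edges, e ⊆ verts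

namespace KUniformHypergraph

variable {k : ℕ}

/-- A hypergraph is linear if any two distinct edges share at most one vertex. -/
def Linear (H : KUniformHypergraph k) : Prop :=
  ∀ e ∈ H.edges, ∀ f ∈ H.edges, e ≠ f → (e ∩ f).card ≤ 1

/-- A hypergraph is connected if for every partition of its vertex set into two
nonempty parts some edge meets both parts. -/
def Connected (H : KUniformHypergraph k) : Prop :=
  ∀ X Y : Finset ℕ, X ∪ Y = H.verts → Disjoint X Y → X.Nonempty → Y.Nonempty →
    ∃ e ∈ H.edges, (e ∩ X).Nonempty ∧ (e ∩ Y).Nonempty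

/-- Deleting a set `z` of vertices (and all edges meeting `z`). -/
def delete (H : KUniformHypergraph k) (z : Finset ℕ) : KUniformHypergraph k where
  verts := H.verts \ z
  edges := H.edges.filter fun e => Disjoint e z
  card_edges := fun e he => H.card_edges e (Finset.mem_filter.mp he).1
  edges_subset := fun e he x hx =>
    Finset.mem_sdiff.mpr ⟨H.edges_subset e (Finset.mem_filter.mp he).1 hx,
      fun hxz => Finset.disjoint_left.mp (Finset.mem_filter.mp he).2 hx hxz⟩

/-- A linear `k`-uniform hypergraph is `(e,v)`-inseparable if it is connected with at
least two edges, remains connected after deleting any set of fewer than `k` vertices no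
two of which lie in a common edge, and remains connected after deleting the vertex set
of any edge. -/
def Inseparable (H : KUniformHypergraph k) : Prop :=
  (H.Connected ∧ 2 ≤ H.edges.card) ∧
  (∀ z : Finset ℕ, z ⊆ H.verts → z.card < k →
    (∀ x ∈ z, ∀ y ∈ z, x ≠ y → ∀ e ∈ H.edges, ¬(x ∈ e ∧ y ∈ e)) →
    (H.delete z).Connected) ∧
  (∀ e ∈ H.edges, (H.delete e).Connected)

/-- The derived graph `F_S` of an ordered `3`-uniform hypergraph `S`: vertices `a, b`
are adjacent iff there is an edge `{x, y, z}` of `S` with `x < y < z` whose outer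
vertices are `a` and `b`. -/
def derived (S : KUniformHypergraph 3) : SimpleGraph ℕ where
  Adj a b := ∃ x y z : ℕ, x < y ∧ y < z ∧ ({x, y, z} : Finset ℕ) ∈ S.edges ∧
    ((a = x ∧ b = z) ∨ (a = z ∧ b = x))
  symm := by
    constructor
    rintro a b ⟨x, y, z, h1, h2, h3, h4⟩
    exact ⟨x, y, z, h1, h2, h3, by tauto⟩
  loopless := by
    constructor
    rintro a ⟨x, y, z, h1, h2, h3, (⟨rfl, rfl⟩ | ⟨rfl, rfl⟩)⟩ <;> omega

/-- The derived graph of `S` is `4`-connected: it has more than `4` vertices and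
deleting any set of fewer than `4` vertices leaves it connected. -/
def DerivedFourConnected (S : KUniformHypergraph 3) : Prop :=
  4 < S.verts.card ∧
  ∀ U : Finset ℕ, U ⊆ S.verts → U.card < 4 →
    ((derived S).induce ((S.verts : Set ℕ) \ (U : Set ℕ))).Connected

end KUniformHypergraph

/-- The ordered `3`-uniform hypergraph `S_n` on vertex set `{1, …, n}` whose edges are
the triples `{x, y, z}` of distinct elements with `x + y + z = n` or `x + y + z = 2n`. -/
def Sn (n : ℕ) : KUniformHypergraph 3 where
  verts := Finset.Icc 1 n
  edges := ((Finset.Icc 1 n).powersetCard 3).filter fun e => e.sum id = n ∨ e.sum id = 2 * n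
  card_edges := fun e he => (Finset.mem_powersetCard.mp (Finset.mem_filter.mp he).1).2
  edges_subset := fun e he => (Finset.mem_powersetCard.mp (Finset.mem_filter.mp he).1).1


open Finset

lemma sum_triple (a b c : ℕ) (hab : a ≠ b) (hac : a ≠ c) (hbc : b ≠ c) :
    ({a, b, c} : Finset ℕ).sum id = a + b + c := by
  rw [Finset.sum_insert (by simp [hab, hac]), Finset.sum_insert (by simp [hbc]),
    Finset.sum_singleton]
  simp only [id]; ring

lemma card_triple (a b c : ℕ) (hab : a ≠ b) (hac : a ≠ c) (hbc : b ≠ c) :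
    ({a, b, c} : Finset ℕ).card = 3 := by
  rw [Finset.card_insert_of_notMem (by simp [hab, hac]),
    Finset.card_insert_of_notMem (by simp [hbc]), Finset.card_singleton]

lemma triple_mem_Sn {n a b c : ℕ} (hab : a ≠ b) (hac : a ≠ c) (hbc : b ≠ c)
    (ha1 : 1 ≤ a) (ha2 : a ≤ n) (hb1 : 1 ≤ b) (hb2 : b ≤ n) (hc1 : 1 ≤ c) (hc2 : c ≤ n)
    (hs : a + b + c = n ∨ a + b + c = 2 * n) :
    ({a, b, c} : Finset ℕ) ∈ (Sn n).edges := by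
  refine Finset.mem_filter.2 ⟨Finset.mem_powersetCard.2 ⟨?_, card_triple a b c hab hac hbc⟩, ?_⟩
  · intro x hx
    simp only [Finset.mem_insert, Finset.mem_singleton] at hx
    rcases hx with rfl | rfl | rfl <;> exact Finset.mem_Icc.2 ⟨by omega, by omega⟩
  · rw [sum_triple a b c hab hac hbc]; exact hs

lemma mem_Sn_elim {n : ℕ} {e : Finset ℕ} (he : e ∈ (Sn n).edges) :
    e.card = 3 ∧ e ⊆ Finset.Icc 1 n ∧ (e.sum id = n ∨ e.sum id = 2 * n) := by
  have h1 := Finset.mem_filter.1 he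
  have h2 := Finset.mem_powersetCard.1 h1.1
  exact ⟨h2.2, h2.1, h1.2⟩

lemma exists_avoid (s : Finset ℕ) (a k : ℕ) (h : s.card < k) :
    ∃ w, a ≤ w ∧ w ≤ a + k - 1 ∧ w ∉ s := by
  by_contra hc
  push_neg at hc
  have hsub : Finset.Icc a (a + k - 1) ⊆ s := fun w hw => by
    rw [Finset.mem_Icc] at hw; exact hc w hw.1 hw.2
  have := Finset.card_le_card hsub
  rw [Nat.card_Icc] at this
  omega

lemma three_elems (D : Finset ℕ) (h : D.card ≤ 3) :
    ∃ d1 d2 d3, ∀ x ∈ D, x = d1 ∨ x = d2 ∨ x = d3 := by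
  have hl : D.toList.length ≤ 3 := by rw [Finset.length_toList]; exact h
  have hm : ∀ x ∈ D, x ∈ D.toList := fun x hx => Finset.mem_toList.2 hx
  rcases hL : D.toList with _ | ⟨a, _ | ⟨b, _ | ⟨c, _ | t⟩⟩⟩ <;> rw [hL] at hm hl <;>
    simp only [List.mem_cons, List.not_mem_nil, or_false] at hm
  · exact ⟨0, 0, 0, fun x hx => absurd (hm x hx) id⟩
  · exact ⟨a, a, a, fun x hx => by rcases hm x hx with h; tauto⟩
  · exact ⟨a, b, b, fun x hx => by rcases hm x hx with h | h <;> tauto⟩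
  · exact ⟨a, b, c, fun x hx => by rcases hm x hx with h | h | h <;> tauto⟩
  · simp at hl; omega

lemma shareEdge (q : ℕ) (hq : 40 ≤ q) (D : Finset ℕ) (d1 d2 d3 : ℕ)
    (hd : ∀ y ∈ D, y = d1 ∨ y = d2 ∨ y = d3)
    (x w : ℕ) (hx1 : 1 ≤ x) (hx2 : x ≤ 16*q) (hxD : x ∉ D)
    (hw1 : 5*q ≤ w) (hw2 : w ≤ 5*q + 31) (hwD : w ∉ D)
    (h1 : w ≠ x) (h2 : w ≠ 16*q - x - 1) (h3 : w ≠ 16*q - x) (h4 : w ≠ 16*q + 1 - x)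
    (h5 : w ≠ 16*q - 2*x) (h6 : w ≠ 32*q - 2*x) (h7 : w ≠ (16*q - x)/2) (h8 : w ≠ (32*q - x)/2)
    (h9 : w ≠ 16*q - x - d1) (h10 : w ≠ 16*q - x - d2) (h11 : w ≠ 16*q - x - d3)
    (h12 : w ≠ 32*q - x - d1) (h13 : w ≠ 32*q - x - d2) (h14 : w ≠ 32*q - x - d3) :
    ∃ e ∈ (Sn (16*q)).edges, Disjoint e D ∧ x ∈ e ∧ w ∈ e := by
  rcases le_or_gt (x + w) (16*q - 2) with hcase | hcase
  · -- a = 16q - x - w, sum = 16q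
    have hxa : x ≠ 16*q - x - w := by
      clear h1 h2 h3 h4 h6 h7 h8 h9 h10 h11 h12 h13 h14; omega
    have hxw : x ≠ w := by clear h2 h3 h4 h5 h6 h7 h8 h9 h10 h11 h12 h13 h14; omega
    have haw : 16*q - x - w ≠ w := by
      clear h1 h2 h3 h4 h5 h6 h8 h9 h10 h11 h12 h13 h14; omega
    have haD : 16*q - x - w ∉ D := fun hm => by
      clear h1 h2 h3 h4 h5 h6 h7 h8 h12 h13 h14
      rcases hd _ hm with h | h | h <;> omega
    refine ⟨{x, 16*q - x - w, w}, triple_mem_Sn hxa hxw haw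
      hx1 hx2 ?_ ?_ ?_ ?_ (Or.inl ?_), ?_, by simp, by simp⟩ <;>
      try (clear h1 h2 h3 h4 h5 h6 h7 h8 h9 h10 h11 h12 h13 h14; omega)
    rw [Finset.disjoint_left]
    intro y hy
    simp only [Finset.mem_insert, Finset.mem_singleton] at hy
    rcases hy with rfl | rfl | rfl <;> assumption
  rcases le_or_gt (16*q + 2) (x + w) with hcase2 | hcase2
  · -- a = 32q - x - w, sum = 32q
    have hxa : x ≠ 32*q - x - w := by
      clear h1 h2 h3 h4 h5 h7 h8 h9 h10 h11 h12 h13 h14; omega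
    have hxw : x ≠ w := by clear h2 h3 h4 h5 h6 h7 h8 h9 h10 h11 h12 h13 h14; omega
    have haw : 32*q - x - w ≠ w := by
      clear h1 h2 h3 h4 h5 h6 h7 h9 h10 h11 h12 h13 h14; omega
    have haD : 32*q - x - w ∉ D := fun hm => by
      clear h1 h2 h3 h4 h5 h6 h7 h8 h9 h10 h11
      rcases hd _ hm with h | h | h <;> omega
    refine ⟨{x, 32*q - x - w, w}, triple_mem_Sn hxa hxw haw
      hx1 hx2 ?_ ?_ ?_ ?_ (Or.inr ?_), ?_, by simp, by simp⟩ <;>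
      try (clear h1 h2 h3 h4 h5 h6 h7 h8 h9 h10 h11 h12 h13 h14; omega)
    rw [Finset.disjoint_left]
    intro y hy
    simp only [Finset.mem_insert, Finset.mem_singleton] at hy
    rcases hy with rfl | rfl | rfl <;> assumption
  · clear h1 h5 h6 h7 h8 h9 h10 h11 h12 h13 h14; omega

lemma shareHub (q : ℕ) (hq : 40 ≤ q) (D : Finset ℕ) (hD : D.card ≤ 3)
    (u v : ℕ) (hu1 : 1 ≤ u) (hu2 : u ≤ 16*q) (huD : u ∉ D)
    (hv1 : 1 ≤ v) (hv2 : v ≤ 16*q) (hvD : v ∉ D) :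
    ∃ w, 1 ≤ w ∧ w ≤ 16*q ∧ w ∉ D ∧
      (∃ e ∈ (Sn (16*q)).edges, Disjoint e D ∧ u ∈ e ∧ w ∈ e) ∧
      (∃ e ∈ (Sn (16*q)).edges, Disjoint e D ∧ v ∈ e ∧ w ∈ e) := by
  obtain ⟨d1, d2, d3, hd⟩ := three_elems D hD
  obtain ⟨w, hw1, hw2, hwB⟩ := exists_avoid ([u, v,
     16*q - u - 1, 16*q - u, 16*q + 1 - u, 16*q - 2*u, 32*q - 2*u, (16*q - u)/2, (32*q - u)/2,
     16*q - u - d1, 16*q - u - d2, 16*q - u - d3, 32*q - u - d1, 32*q - u - d2, 32*q - u - d3,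
     16*q - v - 1, 16*q - v, 16*q + 1 - v, 16*q - 2*v, 32*q - 2*v, (16*q - v)/2, (32*q - v)/2,
     16*q - v - d1, 16*q - v - d2, 16*q - v - d3, 32*q - v - d1, 32*q - v - d2, 32*q - v - d3,
     d1, d2, d3].toFinset) (5*q) 32
     (lt_of_le_of_lt (List.toFinset_card_le _) (by simp))
  have hwa : 1 ≤ w := by omega
  have hwb : w ≤ 16*q := by omega
  have hwc : w ≤ 5*q + 31 := by omega
  simp only [List.mem_toFinset, List.mem_cons, List.not_mem_nil, or_false] at hwB
  push_neg at hwB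
  obtain ⟨n1, n2, n3, n4, n5, n6, n7, n8, n9, n10, n11, n12, n13, n14, n15, n16, n17, n18,
    n19, n20, n21, n22, n23, n24, n25, n26, n27, n28, n29, n30, n31⟩ := hwB
  have hwD : w ∉ D := fun hm => by rcases hd w hm with h | h | h <;> tauto
  refine ⟨w, hwa, hwb, hwD, ?_, ?_⟩
  · exact shareEdge q hq D d1 d2 d3 hd u w hu1 hu2 huD hw1 hwc hwD
      n1 n3 n4 n5 n6 n7 n8 n9 n10 n11 n12 n13 n14 n15
  · exact shareEdge q hq D d1 d2 d3 hd v w hv1 hv2 hvD hw1 hwc hwD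
      n2 n16 n17 n18 n19 n20 n21 n22 n23 n24 n25 n26 n27 n28

lemma cross (q : ℕ) (hq : 40 ≤ q) (D : Finset ℕ) (hD : D.card ≤ 3)
    (X Y : Finset ℕ) (hXY : X ∪ Y = Finset.Icc 1 (16*q) \ D) (hdisj : Disjoint X Y)
    (hX : X.Nonempty) (hY : Y.Nonempty) :
    ∃ e ∈ (Sn (16*q)).edges, Disjoint e D ∧ (e ∩ X).Nonempty ∧ (e ∩ Y).Nonempty := by
  obtain ⟨u, hu⟩ := hX
  obtain ⟨v, hv⟩ := hY
  have hu' : u ∈ Finset.Icc 1 (16*q) \ D := hXY ▸ Finset.mem_union_left _ hu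
  have hv' : v ∈ Finset.Icc 1 (16*q) \ D := hXY ▸ Finset.mem_union_right _ hv
  rw [Finset.mem_sdiff, Finset.mem_Icc] at hu' hv'
  obtain ⟨w, hw1, hw2, hwD, ⟨e1, he1, hd1, hue1, hwe1⟩, ⟨e2, he2, hd2, hve2, hwe2⟩⟩ :=
    shareHub q hq D hD u v hu'.1.1 hu'.1.2 hu'.2 hv'.1.1 hv'.1.2 hv'.2
  have hwXY : w ∈ X ∪ Y := by
    rw [hXY, Finset.mem_sdiff, Finset.mem_Icc]; exact ⟨⟨hw1, hw2⟩, hwD⟩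
  rcases Finset.mem_union.1 hwXY with hwX | hwY
  · exact ⟨e2, he2, hd2, ⟨w, Finset.mem_inter.2 ⟨hwe2, hwX⟩⟩, ⟨v, Finset.mem_inter.2 ⟨hve2, hv⟩⟩⟩
  · exact ⟨e1, he1, hd1, ⟨u, Finset.mem_inter.2 ⟨hue1, hu⟩⟩, ⟨w, Finset.mem_inter.2 ⟨hwe1, hwY⟩⟩⟩

lemma Sn_connected (q : ℕ) (hq : 40 ≤ q) : (Sn (16*q)).Connected := by
  intro X Y hXY hdisj hX hY
  obtain ⟨e, he, _, h1, h2⟩ := cross q hq ∅ (by simp) X Y (by simpa [Sn] using hXY) hdisj hX hY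
  exact ⟨e, he, h1, h2⟩

lemma delete_connected (q : ℕ) (hq : 40 ≤ q) (D : Finset ℕ) (hD : D.card ≤ 3) :
    ((Sn (16*q)).delete D).Connected := by
  intro X Y hXY hdisj hX hY
  obtain ⟨e, he, hdis, h1, h2⟩ := cross q hq D hD X Y hXY hdisj hX hY
  exact ⟨e, Finset.mem_filter.2 ⟨he, hdis⟩, h1, h2⟩

lemma two_le_edges (q : ℕ) (hq : 40 ≤ q) : 2 ≤ (Sn (16*q)).edges.card := by
  have m1 : ({1, 2, 16*q - 3} : Finset ℕ) ∈ (Sn (16*q)).edges :=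
    triple_mem_Sn (by omega) (by omega) (by omega) (by omega) (by omega) (by omega)
      (by omega) (by omega) (by omega) (Or.inl (by omega))
  have m2 : ({1, 3, 16*q - 4} : Finset ℕ) ∈ (Sn (16*q)).edges :=
    triple_mem_Sn (by omega) (by omega) (by omega) (by omega) (by omega) (by omega)
      (by omega) (by omega) (by omega) (Or.inl (by omega))
  refine Finset.one_lt_card.2 ⟨_, m1, _, m2, fun h => ?_⟩
  have : (2:ℕ) ∈ ({1, 3, 16*q - 4} : Finset ℕ) := h ▸ (by simp)
  simp only [Finset.mem_insert, Finset.mem_singleton] at this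
  omega

lemma Sn_linear (q : ℕ) (hq : 40 ≤ q) : (Sn (16*q)).Linear := by
  intro e he f hf hef
  by_contra hc
  push_neg at hc
  obtain ⟨x, hx, y, hy, hxy⟩ := Finset.one_lt_card.1 hc
  rw [Finset.mem_inter] at hx hy
  obtain ⟨hec, hes, hesum⟩ := mem_Sn_elim he
  obtain ⟨hfc, hfs, hfsum⟩ := mem_Sn_elim hf
  have hpe : ({x, y} : Finset ℕ) ⊆ e := by
    intro t ht; simp only [Finset.mem_insert, Finset.mem_singleton] at ht
    rcases ht with rfl | rfl; exacts [hx.1, hy.1]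
  have hpf : ({x, y} : Finset ℕ) ⊆ f := by
    intro t ht; simp only [Finset.mem_insert, Finset.mem_singleton] at ht
    rcases ht with rfl | rfl; exacts [hx.2, hy.2]
  have hcardxy : ({x, y} : Finset ℕ).card = 2 := by
    rw [Finset.card_insert_of_notMem (by simp [hxy]), Finset.card_singleton]
  have h1 : (e \ {x, y}).card = 1 := by rw [Finset.card_sdiff_of_subset hpe, hec, hcardxy]
  have h2 : (f \ {x, y}).card = 1 := by rw [Finset.card_sdiff_of_subset hpf, hfc, hcardxy]
  obtain ⟨z, hz⟩ := Finset.card_eq_one.1 h1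
  obtain ⟨z', hz'⟩ := Finset.card_eq_one.1 h2
  have hze : z ∈ e \ {x, y} := hz ▸ Finset.mem_singleton_self z
  have hz'f : z' ∈ f \ {x, y} := hz' ▸ Finset.mem_singleton_self z'
  rw [Finset.mem_sdiff] at hze hz'f
  simp only [Finset.mem_insert, Finset.mem_singleton, not_or] at hze hz'f
  have he2 : e = {x, y, z} := by
    have h3 := Finset.union_sdiff_of_subset hpe
    rw [hz] at h3
    rw [← h3]; ext t
    simp only [Finset.mem_union, Finset.mem_insert, Finset.mem_singleton]; tauto
  have hf2 : f = {x, y, z'} := by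
    have h3 := Finset.union_sdiff_of_subset hpf
    rw [hz'] at h3
    rw [← h3]; ext t
    simp only [Finset.mem_union, Finset.mem_insert, Finset.mem_singleton]; tauto
  have hsz : z ∈ Finset.Icc 1 (16*q) := hes hze.1
  have hsz' : z' ∈ Finset.Icc 1 (16*q) := hfs hz'f.1
  rw [Finset.mem_Icc] at hsz hsz'
  rw [he2, sum_triple x y z hxy (Ne.symm hze.2.1) (Ne.symm hze.2.2)] at hesum
  rw [hf2, sum_triple x y z' hxy (Ne.symm hz'f.2.1) (Ne.symm hz'f.2.2)] at hfsum
  have hzz : z = z' := by omega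
  exact hef (by rw [he2, hf2, hzz])

lemma derived_adj {n u a w : ℕ} (h1 : 1 ≤ u) (h2 : u < a) (h3 : a < w) (h4 : w ≤ n)
    (hs : u + a + w = n ∨ u + a + w = 2*n) : (Sn n).derived.Adj u w :=
  ⟨u, a, w, h2, h3, triple_mem_Sn (by omega) (by omega) (by omega)
    h1 (by omega) (by omega) (by omega) (by omega) h4 hs, Or.inl ⟨rfl, rfl⟩⟩

lemma reach_step {S : Set ℕ} {G : SimpleGraph ℕ} {a b : ℕ} (ha : a ∈ S) (hb : b ∈ S)
    (h : G.Adj a b) : (G.induce S).Reachable ⟨a, ha⟩ ⟨b, hb⟩ :=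
  SimpleGraph.Adj.reachable h

lemma derived_conn (q : ℕ) (hq : 40 ≤ q) (U : Finset ℕ) (hU : U.card ≤ 3) :
    ((Sn (16*q)).derived.induce (((Sn (16*q)).verts : Set ℕ) \ (U : Set ℕ))).Connected := by
  obtain ⟨h, hh1, hh2, hhU⟩ := exists_avoid U (12*q - 3) 4 (by omega)
  set S : Set ℕ := ((Sn (16*q)).verts : Set ℕ) \ (U : Set ℕ) with hS
  have hmem : ∀ t : ℕ, 1 ≤ t → t ≤ 16*q → t ∉ U → t ∈ S := by
    intro t h1 h2 h3
    simp only [hS, Set.mem_diff, Sn, Finset.coe_Icc, Set.mem_Icc, Finset.mem_coe]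
    exact ⟨⟨h1, h2⟩, h3⟩
  have hhS : h ∈ S := hmem h (by omega) (by omega) hhU
  have key : ∀ u, ∀ huS : u ∈ S, ((Sn (16*q)).derived.induce S).Reachable ⟨u, huS⟩ ⟨h, hhS⟩ := by
    intro u huS
    have hu' : (1 ≤ u ∧ u ≤ 16*q) ∧ u ∉ U := by
      have h5 := huS
      simp only [hS, Set.mem_diff, Sn, Finset.coe_Icc, Set.mem_Icc, Finset.mem_coe] at h5
      exact h5
    obtain ⟨⟨hu1, hu2⟩, huU⟩ := hu'
    have hubAdj : ∀ z, 1 ≤ z → z ≤ 2*q - 1 → (Sn (16*q)).derived.Adj z h := fun z hz1 hz2 =>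
      derived_adj hz1 (show z < 16*q - z - h by omega) (by omega) (by omega) (Or.inl (by omega))
    by_cases hcase0 : u = h
    · subst hcase0; exact SimpleGraph.Reachable.refl _
    rcases le_or_gt u (2*q - 1) with c1 | c1
    · exact reach_step huS hhS (hubAdj u hu1 c1)
    rcases le_or_gt u (4*q - 5) with c2 | c2
    · obtain ⟨w, hwa, hwb, hwU⟩ := exists_avoid U (8*q + 1) 8 (by omega)
      obtain ⟨z, hza, hzb, hzU⟩ := exists_avoid U 1 8 (by omega)
      have hwS : w ∈ S := hmem w (by omega) (by omega) hwU
      have hzS : z ∈ S := hmem z (by omega) (by omega) hzU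
      exact (reach_step huS hwS (derived_adj hu1 (show u < 16*q - u - w by omega)
          (by omega) (by omega) (Or.inl (by omega)))).trans
        (((reach_step hzS hwS (derived_adj (show 1 ≤ z by omega)
          (show z < 16*q - z - w by omega) (by omega) (by omega) (Or.inl (by omega)))).symm).trans
          (reach_step hzS hhS (hubAdj z (by omega) (by omega))))
    rcases le_or_gt u (8*q) with c3 | c3
    · obtain ⟨w, hwa, hwb, hwU⟩ := exists_avoid U (14*q + 3) 8 (by omega)
      obtain ⟨z, hza, hzb, hzU⟩ := exists_avoid U 1 8 (by omega)
      have hwS : w ∈ S := hmem w (by omega) (by omega) hwU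
      have hzS : z ∈ S := hmem z (by omega) (by omega) hzU
      exact (reach_step huS hwS (derived_adj hu1 (show u < 32*q - u - w by omega)
          (by omega) (by omega) (Or.inr (by omega)))).trans
        (((reach_step hzS hwS (derived_adj (show 1 ≤ z by omega)
          (show z < 16*q - z - w by omega) (by omega) (by omega) (Or.inl (by omega)))).symm).trans
          (reach_step hzS hhS (hubAdj z (by omega) (by omega))))
    rcases le_or_gt u (16*q - 17) with c4 | c4
    · obtain ⟨z, hza, hzb, hzU⟩ := exists_avoid U 1 8 (by omega)
      have hzS : z ∈ S := hmem z (by omega) (by omega) hzU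
      exact ((reach_step hzS huS (derived_adj (show 1 ≤ z by omega)
          (show z < 16*q - z - u by omega) (by omega) (by omega) (Or.inl (by omega)))).symm).trans
        (reach_step hzS hhS (hubAdj z (by omega) (by omega)))
    · obtain ⟨z, hza, hzb, hzU⟩ := exists_avoid U 33 8 (by omega)
      have hzS : z ∈ S := hmem z (by omega) (by omega) hzU
      exact ((reach_step hzS huS (derived_adj (show 1 ≤ z by omega)
          (show z < 32*q - z - u by omega) (by omega) (by omega) (Or.inr (by omega)))).symm).trans
        (reach_step hzS hhS (hubAdj z (by omega) (by omega)))
  haveI : Nonempty ↥S := ⟨⟨h, hhS⟩⟩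
  exact SimpleGraph.Connected.mk fun x y => (key x.1 x.2).trans (key y.1 y.2).symm

lemma main_Sn (q : ℕ) (hq : 40 ≤ q) :
    (Sn (16*q)).Linear ∧ (Sn (16*q)).Inseparable ∧
      KUniformHypergraph.DerivedFourConnected (Sn (16*q)) := by
  refine ⟨Sn_linear q hq, ⟨⟨Sn_connected q hq, two_le_edges q hq⟩, ?_, ?_⟩, ?_, ?_⟩
  · intro z _ hcard _
    exact delete_connected q hq z (by omega)
  · intro e he
    exact delete_connected q hq e (le_of_eq ((Sn (16*q)).card_edges e he))
  · show 4 < (Finset.Icc 1 (16*q)).card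
    rw [Nat.card_Icc]; omega
  · intro U _ hUcard
    exact derived_conn q hq U (by omega)

/-- For every sufficiently large `n` divisible by `16`, the hypergraph `S_n` is linear
and `(e,v)`-inseparable and its derived graph is `4`-connected; consequently there are
infinitely many (i.e. with arbitrarily many vertices) ordered, `(e,v)`-inseparable,
linear `3`-uniform hypergraphs `S` whose derived graph `F_S` is `4`-connected. -/
theorem Sn_inseparable_and_derived_four_connected :
    (∃ N : ℕ, ∀ n : ℕ, N ≤ n → 16 ∣ n →
      (Sn n).Linear ∧ (Sn n).Inseparable ∧ KUniformHypergraph.DerivedFourConnected (Sn n)) ∧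
    (∀ N : ℕ, ∃ S : KUniformHypergraph 3, N ≤ S.verts.card ∧
      S.Linear ∧ S.Inseparable ∧ KUniformHypergraph.DerivedFourConnected S) := by
  constructor
  · refine ⟨640, fun n hn hdvd => ?_⟩
    obtain ⟨q, rfl⟩ := hdvd
    exact main_Sn q (by omega)
  · intro N
    obtain ⟨h1, h2, h3⟩ := main_Sn (40 + N) (by omega)
    refine ⟨Sn (16*(40 + N)), ?_, h1, h2, h3⟩
    show N ≤ (Finset.Icc 1 (16*(40 + N))).card
    rw [Nat.card_Icc]; omega
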